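/- Let G be a group, let A ⊆ G be a nonempty finite subset, and let α ≥ 1 be a real number such that the multiplicative energy satisfies E(A,A) ≥ |A|³/α. Fix a real δ with 0 < δ < 1, and let r be the representation function of A·A⁻¹, i.e. r(x) = #{(a,b) ∈ A×A : ab⁻¹ = x}. Then there exists x ∈ G such that |A ∩ A·x| ≥ |A|/(2α) and #{(a,b) ∈ (A ∩ A·x)² : r(ab⁻¹) ≥ δ|A|/(2α²)} ≥ (1−δ)·|A ∩ A·x|². -/

import Mathlib

open Finset

section BSGAux

variable {G : Type*} [Group G] [DecidableEq G]

open scoped Classical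

private lemma energy_eq_sum_aux (A : Finset G) :
    ((A ×ˢ A ×ˢ A ×ˢ A).filter
        (fun q : G × G × G × G => q.1 * q.2.2.1 = q.2.1 * q.2.2.2)).card
      = ∑ p ∈ A ×ˢ A, (A ∩ A.image (· * (p.1 * p.2⁻¹))).card := by
  rw [Finset.card_eq_sum_card_fiberwise
      (f := fun q : G × G × G × G => (q.2.2.2, q.2.2.1)) (t := A ×ˢ A)
      (fun q hq => by
        change _ ∈ (_ : Finset _) at hq
        simp only [Finset.mem_filter, Finset.mem_product] at hq
        change _ ∈ (_ : Finset _)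
        simp only [Finset.mem_product]
        exact ⟨hq.1.2.2.2, hq.1.2.2.1⟩)]
  refine Finset.sum_congr rfl fun p hp => ?_
  simp only [Finset.mem_product] at hp
  refine Finset.card_nbij' (fun q => q.1)
    (fun a => (a, a * p.2 * p.1⁻¹, p.2, p.1)) ?_ ?_ ?_ ?_
  · rintro ⟨a, b, c, d⟩ hq
    change _ ∈ (_ : Finset _) at hq
    simp only [Finset.mem_filter, Finset.mem_product, Prod.ext_iff] at hq
    obtain ⟨⟨⟨ha, hb, hc, hd⟩, heq⟩, h1, h2⟩ := hq
    subst h1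
    subst h2
    change _ ∈ (_ : Finset _)
    simp only [Finset.mem_inter, Finset.mem_image]
    refine ⟨ha, b, hb, ?_⟩
    rw [← mul_assoc, ← heq]
    group
  · intro a ha
    change _ ∈ (_ : Finset _) at ha
    simp only [Finset.mem_inter, Finset.mem_image] at ha
    obtain ⟨ha1, b, hb, hab⟩ := ha
    have hb' : a * p.2 * p.1⁻¹ = b := by rw [← hab]; group
    change _ ∈ (_ : Finset _)
    simp only [Finset.mem_filter, Finset.mem_product, Prod.ext_iff]
    refine ⟨⟨⟨ha1, hb' ▸ hb, hp.2, hp.1⟩, by group⟩, ?_⟩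
    simp
  · rintro ⟨a, b, c, d⟩ hq
    change _ ∈ (_ : Finset _) at hq
    simp only [Finset.mem_filter, Finset.mem_product, Prod.ext_iff] at hq
    obtain ⟨⟨⟨ha, hb, hc, hd⟩, heq⟩, h1, h2⟩ := hq
    subst h1
    subst h2
    have hb2 : a * p.2 * p.1⁻¹ = b := by rw [heq]; group
    simp [Prod.ext_iff, hb2]
  · intro a ha
    rfl

private lemma bad_sum_le_aux (A : Finset G) (r : G → ℕ)
    (hr : ∀ x : G, r x = ((A ×ˢ A).filter fun q : G × G => q.1 * q.2⁻¹ = x).card)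
    (k : ℝ) :
    ∑ p ∈ A ×ˢ A,
        (((A ∩ A.image (· * (p.1 * p.2⁻¹))) ×ˢ (A ∩ A.image (· * (p.1 * p.2⁻¹)))).filter
          (fun q : G × G => ¬ k ≤ (r (q.1 * q.2⁻¹) : ℝ))).card
      ≤ A.card * ∑ q ∈ (A ×ˢ A).filter (fun q : G × G => ¬ k ≤ (r (q.1 * q.2⁻¹) : ℝ)),
          r (q.1 * q.2⁻¹) := by
  set T := ((A ×ˢ A) ×ˢ (A ×ˢ A)).filter
      (fun z : (G × G) × G × G => z.2.1 ∈ A.image (· * (z.1.1 * z.1.2⁻¹)) ∧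
        z.2.2 ∈ A.image (· * (z.1.1 * z.1.2⁻¹)) ∧ ¬ k ≤ (r (z.2.1 * z.2.2⁻¹) : ℝ)) with hT
  set W := ((A ×ˢ A) ×ˢ A).filter
      (fun w : (G × G) × G => (¬ k ≤ (r (w.1.1 * w.1.2⁻¹) : ℝ)) ∧ w.1.2 * w.1.1⁻¹ * w.2 ∈ A)
      with hW
  have hTcard : ∑ p ∈ A ×ˢ A,
      (((A ∩ A.image (· * (p.1 * p.2⁻¹))) ×ˢ (A ∩ A.image (· * (p.1 * p.2⁻¹)))).filter
        (fun q : G × G => ¬ k ≤ (r (q.1 * q.2⁻¹) : ℝ))).card = T.card := by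
    rw [Finset.card_eq_sum_card_fiberwise (f := fun z : (G × G) × G × G => z.1)
        (t := A ×ˢ A)
        (fun z hz => by
          change _ ∈ (_ : Finset _) at hz
          simp only [hT, Finset.mem_filter, Finset.mem_product] at hz
          exact Finset.mem_product.2 hz.1.1)]
    refine Finset.sum_congr rfl fun p hp => ?_
    refine Finset.card_nbij' (fun q : G × G => (p, q)) (fun z => z.2) ?_ ?_ ?_ ?_
    · intro q hq
      change _ ∈ (_ : Finset _) at hq
      simp only [Finset.mem_filter, Finset.mem_product, Finset.mem_inter] at hq
      change _ ∈ (_ : Finset _)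
      simp only [hT, Finset.mem_filter, Finset.mem_product]
      simp only [Finset.mem_product] at hp
      obtain ⟨⟨⟨hq1, hq1'⟩, hq2, hq2'⟩, hq3⟩ := hq
      tauto
    · intro z hz
      change _ ∈ (_ : Finset _) at hz
      simp only [hT, Finset.mem_filter, Finset.mem_product] at hz
      obtain ⟨⟨⟨hz1, hz2⟩, hz3, hz4, hz5⟩, hz6⟩ := hz
      subst hz6
      change _ ∈ (_ : Finset _)
      simp only [Finset.mem_filter, Finset.mem_product, Finset.mem_inter]
      exact ⟨⟨⟨hz2.1, hz3⟩, hz2.2, hz4⟩, hz5⟩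
    · intro q hq; rfl
    · intro z hz
      change _ ∈ (_ : Finset _) at hz
      simp only [Finset.mem_filter] at hz
      rw [← hz.2]
  have hTW : T.card ≤ (A ×ˢ W).card := by
    refine Finset.card_le_card_of_injOn
      (fun z => (z.1.2, ((z.2.1 * z.1.2 * z.1.1⁻¹, z.2.2 * z.1.2 * z.1.1⁻¹), z.2.1))) ?_ ?_
    · rintro ⟨⟨u, v⟩, a, b⟩ hz
      change _ ∈ (_ : Finset _) at hz
      simp only [hT, Finset.mem_filter, Finset.mem_product, Finset.mem_image] at hz
      obtain ⟨⟨⟨hu, hv⟩, ha, hb⟩, ⟨c, hc, hca⟩, ⟨d, hd, hdb⟩, hbad⟩ := hz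
      have hc' : a * v * u⁻¹ = c := by rw [← hca]; group
      have hd' : b * v * u⁻¹ = d := by rw [← hdb]; group
      change _ ∈ (_ : Finset _)
      simp only [hW, Finset.mem_product, Finset.mem_filter]
      refine ⟨hv, ⟨⟨hc' ▸ hc, hd' ▸ hd⟩, ha⟩, ?_, ?_⟩
      · have : a * v * u⁻¹ * (b * v * u⁻¹)⁻¹ = a * b⁻¹ := by group
        rw [this]; exact hbad
      · have : b * v * u⁻¹ * (a * v * u⁻¹)⁻¹ * a = b := by group
        rw [this]; exact hb
    · rintro ⟨⟨u, v⟩, a, b⟩ hz ⟨⟨u', v'⟩, a', b'⟩ hz' heq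
      simp only [Prod.ext_iff] at heq
      obtain ⟨h1, ⟨h2, h3⟩, h4⟩ := heq
      subst h1; subst h4
      have hu : u = u' := inv_injective (mul_left_cancel h2)
      subst hu
      have hb : b = b' := by
        have := mul_right_cancel h3
        exact mul_right_cancel this
      subst hb
      rfl
  have hWcard : W.card = ∑ q ∈ (A ×ˢ A).filter (fun q : G × G => ¬ k ≤ (r (q.1 * q.2⁻¹) : ℝ)),
      r (q.1 * q.2⁻¹) := by
    rw [Finset.card_eq_sum_card_fiberwise (f := fun w : (G × G) × G => w.1)
        (t := (A ×ˢ A).filter (fun q : G × G => ¬ k ≤ (r (q.1 * q.2⁻¹) : ℝ)))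
        (fun w hw => by
          change _ ∈ (_ : Finset _) at hw
          simp only [hW, Finset.mem_filter, Finset.mem_product] at hw
          change _ ∈ (_ : Finset _)
          simp only [Finset.mem_filter, Finset.mem_product]
          exact ⟨hw.1.1, hw.2.1⟩)]
    refine Finset.sum_congr rfl fun q hq => ?_
    simp only [Finset.mem_filter, Finset.mem_product] at hq
    rw [hr (q.1 * q.2⁻¹)]
    refine Finset.card_nbij' (fun w => (w.2, q.2 * q.1⁻¹ * w.2)) (fun v => (q, v.1)) ?_ ?_ ?_ ?_
    · intro w hw
      change _ ∈ (_ : Finset _) at hw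
      simp only [hW, Finset.mem_filter, Finset.mem_product] at hw
      obtain ⟨⟨⟨⟨h11, h12⟩, h2⟩, hb2, hb3⟩, hfib⟩ := hw
      subst hfib
      change _ ∈ (_ : Finset _)
      simp only [Finset.mem_filter, Finset.mem_product]
      exact ⟨⟨h2, hb3⟩, by group⟩
    · intro v hv
      change _ ∈ (_ : Finset _) at hv
      simp only [Finset.mem_filter, Finset.mem_product] at hv
      obtain ⟨⟨hv1, hv2⟩, hv3⟩ := hv
      have hkey : q.2 * q.1⁻¹ * v.1 = v.2 := by
        have h2 : v.1 = q.1 * q.2⁻¹ * v.2 := by rw [← hv3]; group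
        rw [h2]; group
      change _ ∈ (_ : Finset _)
      simp only [hW, Finset.mem_filter, Finset.mem_product]
      have hv2' : q.2 * q.1⁻¹ * v.1 ∈ A := by rw [hkey]; exact hv2
      obtain ⟨⟨hqA, hqA'⟩, hqbad⟩ := hq
      tauto
    · intro w hw
      change _ ∈ (_ : Finset _) at hw
      simp only [Finset.mem_filter] at hw
      rw [← hw.2]
    · intro v hv
      change _ ∈ (_ : Finset _) at hv
      simp only [Finset.mem_filter, Finset.mem_product] at hv
      obtain ⟨⟨hv1, hv2⟩, hv3⟩ := hv
      have hkey : q.2 * q.1⁻¹ * v.1 = v.2 := by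
        have h2 : v.1 = q.1 * q.2⁻¹ * v.2 := by rw [← hv3]; group
        rw [h2]; group
      simp [Prod.ext_iff, hkey]
  calc ∑ p ∈ A ×ˢ A,
        (((A ∩ A.image (· * (p.1 * p.2⁻¹))) ×ˢ (A ∩ A.image (· * (p.1 * p.2⁻¹)))).filter
          (fun q : G × G => ¬ k ≤ (r (q.1 * q.2⁻¹) : ℝ))).card
      = T.card := hTcard
    _ ≤ (A ×ˢ W).card := hTW
    _ = A.card * W.card := Finset.card_product _ _
    _ = _ := by rw [hWcard]

private lemma bsg_numeric {I : Type*} (s : Finset I) (hF BF PF : I → ℕ) (n α δ k : ℝ)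
    (hα : 1 ≤ α) (hδ0 : 0 < δ) (hn0 : 0 < n) (hkdef : k = δ * n / (2 * α ^ 2))
    (hcard : (s.card : ℝ) = n ^ 2)
    (hPB : ∀ i ∈ s, PF i + BF i = hF i * hF i)
    (hcon : ∀ i ∈ s, n / (2 * α) ≤ (hF i : ℝ) → (PF i : ℝ) < (1 - δ) * (hF i : ℝ) ^ 2)
    (hES : n ^ 3 / α ≤ ∑ i ∈ s, (hF i : ℝ))
    (hB : ∑ i ∈ s, (BF i : ℝ) ≤ n * (n ^ 2 * k)) : False := by
  have hα0 : (0:ℝ) < α := lt_of_lt_of_le one_pos hα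
  have hCS : (∑ i ∈ s, (hF i : ℝ)) ^ 2 ≤ n ^ 2 * ∑ i ∈ s, (hF i : ℝ) ^ 2 := by
    have := sq_sum_le_card_mul_sum_sq (s := s) (f := fun i => (hF i : ℝ))
    rw [hcard] at this
    exact this
  have key : ∀ i ∈ s, δ * (hF i : ℝ) ^ 2 - (BF i : ℝ) ≤ δ * (n / (2 * α)) ^ 2 := by
    intro i hi
    have hPBi := hPB i hi
    have hBR : (PF i : ℝ) + (BF i : ℝ) = (hF i : ℝ) * (hF i : ℝ) := by
      have : ((PF i + BF i : ℕ) : ℝ) = ((hF i * hF i : ℕ) : ℝ) := by rw [hPBi]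
      push_cast at this
      linarith [this]
    by_cases hx : n / (2 * α) ≤ (hF i : ℝ)
    · have hcx := hcon i hi hx
      have hrhs : (0:ℝ) ≤ δ * (n / (2 * α)) ^ 2 := by positivity
      nlinarith [hcx, hBR]
    · push_neg at hx
      have hb0 : (0:ℝ) ≤ (BF i : ℝ) := Nat.cast_nonneg _
      have hh0 : (0:ℝ) ≤ (hF i : ℝ) := Nat.cast_nonneg _
      nlinarith [hb0, hδ0.le, mul_le_mul hx.le hx.le hh0 (hh0.trans hx.le)]
  have hsum : δ * (∑ i ∈ s, (hF i : ℝ) ^ 2) - (∑ i ∈ s, (BF i : ℝ))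
      ≤ n ^ 2 * (δ * (n / (2 * α)) ^ 2) := by
    have h1 : ∑ i ∈ s, (δ * (hF i : ℝ) ^ 2 - (BF i : ℝ)) ≤ s.card • (δ * (n / (2 * α)) ^ 2) :=
      Finset.sum_le_card_nsmul _ _ _ key
    rw [Finset.sum_sub_distrib, ← Finset.mul_sum, nsmul_eq_mul, hcard] at h1
    exact h1
  have h1 : (n ^ 3 / α) ^ 2 ≤ n ^ 2 * ∑ i ∈ s, (hF i : ℝ) ^ 2 := by
    refine le_trans ?_ hCS
    have h0 : (0:ℝ) ≤ n ^ 3 / α := by positivity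
    nlinarith [hES, h0]
  have h2 : δ * (n ^ 3 / α) ^ 2
      ≤ n ^ 2 * (n * (n ^ 2 * k) + n ^ 2 * (δ * (n / (2 * α)) ^ 2)) := by
    have h3 : δ * (∑ i ∈ s, (hF i : ℝ) ^ 2)
        ≤ n * (n ^ 2 * k) + n ^ 2 * (δ * (n / (2 * α)) ^ 2) := by linarith [hsum, hB]
    nlinarith [h1, h3, hδ0.le, sq_nonneg n, hn0.le]
  rw [hkdef] at h2
  have hfinal : δ * n ^ 6 / α ^ 2 ≤ (3 / 4) * (δ * n ^ 6 / α ^ 2) := by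
    have e1 : δ * (n ^ 3 / α) ^ 2 = δ * n ^ 6 / α ^ 2 := by ring
    have e2 : n ^ 2 * (n * (n ^ 2 * (δ * n / (2 * α ^ 2))) + n ^ 2 * (δ * (n / (2 * α)) ^ 2))
        = (3 / 4) * (δ * n ^ 6 / α ^ 2) := by ring
    rw [e1, e2] at h2
    exact h2
  have hpos : 0 < δ * n ^ 6 / α ^ 2 := by positivity
  nlinarith [hfinal, hpos]

end BSGAux

open scoped Classical in
/-- Key step towards the Balog–Szemerédi–Gowers theorem: if `A` is a nonempty finite
subset of a group `G` with multiplicative energy `E(A,A) ≥ |A|³/α` and `0 < δ < 1`, then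
there is `x ∈ G` with `|A ∩ A·x| ≥ |A|/(2α)` such that at least `(1-δ)|A ∩ A·x|²` pairs
`(a,b) ∈ (A ∩ A·x)²` satisfy `r(ab⁻¹) ≥ δ|A|/(2α²)`, where `r` is the representation
function of `A·A⁻¹`. -/
theorem exists_translate_with_popular_differences {G : Type*} [Group G] [DecidableEq G]
    (A : Finset G) (hA : A.Nonempty) (α : ℝ) (hα : 1 ≤ α)
    (hE : (A.card : ℝ) ^ 3 / α ≤
      (((A ×ˢ A ×ˢ A ×ˢ A).filter
        fun q : G × G × G × G => q.1 * q.2.2.1 = q.2.1 * q.2.2.2).card : ℝ))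
    (δ : ℝ) (hδ0 : 0 < δ) (hδ1 : δ < 1) (r : G → ℕ)
    (hr : ∀ x : G, r x = ((A ×ˢ A).filter fun q : G × G => q.1 * q.2⁻¹ = x).card) :
    ∃ x : G,
      (A.card : ℝ) / (2 * α) ≤ ((A ∩ A.image (· * x)).card : ℝ) ∧
      (1 - δ) * ((A ∩ A.image (· * x)).card : ℝ) ^ 2 ≤
        (((((A ∩ A.image (· * x))) ×ˢ (A ∩ A.image (· * x))).filter
          fun q : G × G => δ * (A.card : ℝ) / (2 * α ^ 2) ≤ (r (q.1 * q.2⁻¹) : ℝ)).card : ℝ) := by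
  classical
  by_contra hcon
  push_neg at hcon
  have hn0 : (0:ℝ) < (A.card : ℝ) := by
    have := hA.card_pos
    exact_mod_cast this
  refine bsg_numeric (A ×ˢ A)
    (fun p : G × G => (A ∩ A.image (· * (p.1 * p.2⁻¹))).card)
    (fun p : G × G => (((A ∩ A.image (· * (p.1 * p.2⁻¹))) ×ˢ (A ∩ A.image (· * (p.1 * p.2⁻¹)))).filter
        (fun q : G × G => ¬ δ * (A.card : ℝ) / (2 * α ^ 2) ≤ (r (q.1 * q.2⁻¹) : ℝ))).card)
    (fun p : G × G => (((A ∩ A.image (· * (p.1 * p.2⁻¹))) ×ˢ (A ∩ A.image (· * (p.1 * p.2⁻¹)))).filter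
        (fun q : G × G => δ * (A.card : ℝ) / (2 * α ^ 2) ≤ (r (q.1 * q.2⁻¹) : ℝ))).card)
    (A.card : ℝ) α δ (δ * (A.card : ℝ) / (2 * α ^ 2)) hα hδ0 hn0 rfl ?_ ?_ ?_ ?_ ?_
  · rw [Finset.card_product]; push_cast; ring
  · intro i _
    rw [Finset.card_filter_add_card_filter_not, Finset.card_product]
  · intro i _ hx
    exact hcon (i.1 * i.2⁻¹) hx
  · have h0 := energy_eq_sum_aux A
    calc ((A.card:ℝ)) ^ 3 / α ≤ _ := hE
      _ = _ := by rw [h0]; push_cast; rfl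
  · have h1 := bad_sum_le_aux A r hr (δ * (A.card : ℝ) / (2 * α ^ 2))
    have h2 : (∑ p ∈ A ×ˢ A, ((((A ∩ A.image (· * (p.1 * p.2⁻¹))) ×ˢ
          (A ∩ A.image (· * (p.1 * p.2⁻¹)))).filter
          (fun q : G × G => ¬ δ * (A.card : ℝ) / (2 * α ^ 2) ≤ (r (q.1 * q.2⁻¹) : ℝ))).card : ℝ))
        ≤ (A.card : ℝ) * ∑ q ∈ (A ×ˢ A).filter
            (fun q : G × G => ¬ δ * (A.card : ℝ) / (2 * α ^ 2) ≤ (r (q.1 * q.2⁻¹) : ℝ)),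
            (r (q.1 * q.2⁻¹) : ℝ) := by
      exact_mod_cast h1
    refine le_trans h2 ?_
    set k := δ * (A.card : ℝ) / (2 * α ^ 2) with hk
    have hα0 : (0:ℝ) < α := lt_of_lt_of_le one_pos hα
    have hk0 : (0:ℝ) ≤ k := by rw [hk]; positivity
    have h4 : ∑ q ∈ (A ×ˢ A).filter (fun q : G × G => ¬ k ≤ (r (q.1 * q.2⁻¹) : ℝ)),
        ((r (q.1 * q.2⁻¹) : ℝ))
        ≤ ((A ×ˢ A).filter (fun q : G × G => ¬ k ≤ (r (q.1 * q.2⁻¹) : ℝ))).card • k := by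
      refine Finset.sum_le_card_nsmul _ _ _ (fun q hq => ?_)
      simp only [Finset.mem_filter] at hq
      exact le_of_lt (lt_of_not_ge hq.2)
    rw [nsmul_eq_mul] at h4
    have h5 : (((A ×ˢ A).filter (fun q : G × G => ¬ k ≤ (r (q.1 * q.2⁻¹) : ℝ))).card : ℝ)
        ≤ (A.card : ℝ) ^ 2 := by
      have h6 : (((A ×ˢ A).filter
          (fun q : G × G => ¬ k ≤ (r (q.1 * q.2⁻¹) : ℝ))).card : ℝ) ≤ ((A ×ˢ A).card : ℝ) :=
        Nat.cast_le.mpr (Finset.card_filter_le _ _)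
      rw [Finset.card_product] at h6
      push_cast at h6
      nlinarith [h6]
    calc (A.card : ℝ) * ∑ q ∈ (A ×ˢ A).filter
            (fun q : G × G => ¬ k ≤ (r (q.1 * q.2⁻¹) : ℝ)), ((r (q.1 * q.2⁻¹) : ℝ))
        ≤ (A.card : ℝ) * (((A ×ˢ A).filter
            (fun q : G × G => ¬ k ≤ (r (q.1 * q.2⁻¹) : ℝ))).card * k) :=
          mul_le_mul_of_nonneg_left h4 (Nat.cast_nonneg _)
      _ ≤ (A.card : ℝ) * ((A.card : ℝ) ^ 2 * k) := by
          refine mul_le_mul_of_nonneg_left ?_ (Nat.cast_nonneg _)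
          exact mul_le_mul_of_nonneg_right h5 hk0
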